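/- Let S be a finite nonempty type. Let P and Q be row-stochastic S × S real matrices (all entries nonnegative and each row summing to 1), let μ be a stationary distribution of P and ν a stationary distribution of Q. Let C ≥ 1 and 0 < ρ < 1 be reals such that for every probability vector λ on S and every integer t ≥ 1, ∑_s |(λPᵗ)(s) − μ(s)| ≤ C·ρᵗ. Set n̂ := ⌈log C / log(1/ρ)⌉. Then ∑_s |μ(s) − ν(s)| ≤ (n̂ + C·ρ^{n̂}/(1 − ρ)) · max_s ∑_{s'} |P(s,s') − Q(s,s')|. -/

import Mathlib

open Finset

set_option linter.unusedSectionVars false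
set_option maxHeartbeats 1000000
section aux
variable {S : Type*} [Fintype S] [DecidableEq S]

lemma aux_contract (P : Matrix S S ℝ) (hP0 : ∀ s s', 0 ≤ P s s')
    (hP1 : ∀ s, ∑ s', P s s' = 1) (z : S → ℝ) :
    ∑ s', |Matrix.vecMul z P s'| ≤ ∑ s, |z s| := by
  have h1 : ∀ s', |Matrix.vecMul z P s'| ≤ ∑ s, |z s| * P s s' := by
    intro s'
    simp only [Matrix.vecMul, dotProduct]
    refine (Finset.abs_sum_le_sum_abs _ _).trans (Finset.sum_le_sum fun s _ => ?_)
    rw [abs_mul, abs_of_nonneg (hP0 s s')]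
  calc ∑ s', |Matrix.vecMul z P s'| ≤ ∑ s', ∑ s, |z s| * P s s' :=
        Finset.sum_le_sum fun s' _ => h1 s'
    _ = ∑ s, |z s| := by rw [Finset.sum_comm]; simp [← Finset.mul_sum, hP1]

lemma aux_contract_pow (P : Matrix S S ℝ) (hP0 : ∀ s s', 0 ≤ P s s')
    (hP1 : ∀ s, ∑ s', P s s' = 1) (z : S → ℝ) (k : ℕ) :
    ∑ s, |Matrix.vecMul z (P ^ k) s| ≤ ∑ s, |z s| := by
  induction k with
  | zero => simp [Matrix.vecMul_one]
  | succ n ih =>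
    rw [pow_succ]
    calc ∑ s, |Matrix.vecMul z (P ^ n * P) s|
        = ∑ s, |Matrix.vecMul (Matrix.vecMul z (P ^ n)) P s| := by
          simp_rw [Matrix.vecMul_vecMul]
      _ ≤ ∑ s, |Matrix.vecMul z (P ^ n) s| := aux_contract P hP0 hP1 _
      _ ≤ ∑ s, |z s| := ih

lemma aux_tele (P Q : Matrix S S ℝ) (t : ℕ) :
    P ^ t - Q ^ t = ∑ k ∈ Finset.range t, Q ^ (t - 1 - k) * (P - Q) * P ^ k := by
  have h : ∀ k ∈ Finset.range t,
      Q ^ (t - 1 - k) * (P - Q) * P ^ k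
        = Q ^ (t - (k+1)) * P ^ (k+1) - Q ^ (t - k) * P ^ k := by
    intro k hk
    rw [Finset.mem_range] at hk
    have h1 : t - 1 - k = t - (k+1) := by omega
    have h2 : t - k = (t - (k+1)) + 1 := by omega
    rw [h1, h2, Matrix.mul_sub, Matrix.sub_mul, mul_assoc, ← pow_succ', pow_succ, pow_succ Q]
  rw [Finset.sum_congr rfl h, Finset.sum_range_sub (fun k => Q ^ (t - k) * P ^ k)]
  simp

lemma aux_geo (P : Matrix S S ℝ) (μ : S → ℝ) (C ρ : ℝ)
    (hC : 1 ≤ C) (hρ0 : 0 < ρ)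
    (hmix : ∀ l : S → ℝ, (∀ s, 0 ≤ l s) → ∑ s, l s = 1 →
      ∀ t : ℕ, 1 ≤ t → ∑ s, |Matrix.vecMul l (P ^ t) s - μ s| ≤ C * ρ ^ t)
    (z : S → ℝ) (hz : ∑ s, z s = 0) (k : ℕ) :
    ∑ s, |Matrix.vecMul z (P ^ k) s| ≤ C * ρ ^ k * ∑ s, |z s| := by
  rcases Nat.eq_zero_or_pos k with hk | hk
  · subst hk
    simp only [pow_zero, Matrix.vecMul_one]
    have h := Finset.sum_nonneg (fun s (_ : s ∈ Finset.univ) => abs_nonneg (z s))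
    nlinarith
  · set m := ∑ s, max (z s) 0 with hm
    have hmaxneg : ∀ a : ℝ, max (-a) 0 = max a 0 - a := by
      intro a
      rcases le_total a 0 with h | h
      · rw [max_eq_left (neg_nonneg.2 h), max_eq_right h]; ring
      · rw [max_eq_right (neg_nonpos.2 h), max_eq_left h]; ring
    have hm0 : 0 ≤ m := Finset.sum_nonneg fun s _ => le_max_right _ _
    have hmneg : ∑ s, max (-z s) 0 = m := by
      simp [hmaxneg, Finset.sum_sub_distrib, hz, hm]
    have habs : ∑ s, |z s| = 2 * m := by
      have : ∀ s, |z s| = max (z s) 0 + max (-z s) 0 := by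
        intro s
        rcases le_total (z s) 0 with h | h
        · rw [abs_of_nonpos h, max_eq_right h, max_eq_left (neg_nonneg.2 h)]; ring
        · rw [abs_of_nonneg h, max_eq_left h, max_eq_right (neg_nonpos.2 h)]; ring
      rw [Finset.sum_congr rfl fun s _ => this s, Finset.sum_add_distrib, hmneg, ← hm]; ring
    rcases eq_or_lt_of_le hm0 with hmz | hmpos
    · have hz0 : ∀ s, z s = 0 := by
        intro s
        have h1 : ∑ s, |z s| = 0 := by rw [habs, ← hmz]; ring
        have h2 := (Finset.sum_eq_zero_iff_of_nonneg
          (fun s (_ : s ∈ Finset.univ) => abs_nonneg (z s))).1 h1 s (Finset.mem_univ s)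
        exact abs_eq_zero.1 h2
      have : ∀ s, Matrix.vecMul z (P ^ k) s = 0 := by
        intro s; simp [Matrix.vecMul, dotProduct, hz0]
      rw [Finset.sum_congr rfl fun s _ => by rw [this s]]
      simp
      positivity
    · set l₁ : S → ℝ := fun s => max (z s) 0 / m with hl₁
      set l₂ : S → ℝ := fun s => max (-z s) 0 / m with hl₂
      have hl₁0 : ∀ s, 0 ≤ l₁ s := fun s => div_nonneg (le_max_right _ _) hm0
      have hl₂0 : ∀ s, 0 ≤ l₂ s := fun s => div_nonneg (le_max_right _ _) hm0
      have hl₁1 : ∑ s, l₁ s = 1 := by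
        rw [hl₁, ← Finset.sum_div, ← hm, div_self (ne_of_gt hmpos)]
      have hl₂1 : ∑ s, l₂ s = 1 := by
        rw [hl₂, ← Finset.sum_div, hmneg, div_self (ne_of_gt hmpos)]
      have h1 := hmix l₁ hl₁0 hl₁1 k hk
      have h2 := hmix l₂ hl₂0 hl₂1 k hk
      have hlin : ∀ s, Matrix.vecMul z (P ^ k) s
          = m * Matrix.vecMul l₁ (P ^ k) s - m * Matrix.vecMul l₂ (P ^ k) s := by
        intro s
        simp only [Matrix.vecMul, dotProduct, Finset.mul_sum, ← Finset.sum_sub_distrib]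
        refine Finset.sum_congr rfl fun i _ => ?_
        have hzi : z i = m * l₁ i - m * l₂ i := by
          rw [hl₁, hl₂]
          field_simp
          rw [hmaxneg]; ring
        rw [hzi]; ring
      calc ∑ s, |Matrix.vecMul z (P ^ k) s|
          = ∑ s, |m * (Matrix.vecMul l₁ (P ^ k) s - μ s)
              - m * (Matrix.vecMul l₂ (P ^ k) s - μ s)| := by
            refine Finset.sum_congr rfl fun s _ => ?_
            rw [hlin s]; congr 1; ring
        _ ≤ ∑ s, (m * |Matrix.vecMul l₁ (P ^ k) s - μ s|
              + m * |Matrix.vecMul l₂ (P ^ k) s - μ s|) := by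
            refine Finset.sum_le_sum fun s _ => ?_
            calc |m * (Matrix.vecMul l₁ (P ^ k) s - μ s)
                  - m * (Matrix.vecMul l₂ (P ^ k) s - μ s)|
                ≤ |m * (Matrix.vecMul l₁ (P ^ k) s - μ s)|
                  + |m * (Matrix.vecMul l₂ (P ^ k) s - μ s)| := abs_sub _ _
              _ = m * |Matrix.vecMul l₁ (P ^ k) s - μ s|
                  + m * |Matrix.vecMul l₂ (P ^ k) s - μ s| := by
                  rw [abs_mul, abs_mul, abs_of_nonneg hm0]
        _ = m * (∑ s, |Matrix.vecMul l₁ (P ^ k) s - μ s|)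
              + m * (∑ s, |Matrix.vecMul l₂ (P ^ k) s - μ s|) := by
            rw [Finset.sum_add_distrib, Finset.mul_sum, Finset.mul_sum]
        _ ≤ m * (C * ρ ^ k) + m * (C * ρ ^ k) :=
            add_le_add (mul_le_mul_of_nonneg_left h1 hm0) (mul_le_mul_of_nonneg_left h2 hm0)
        _ = C * ρ ^ k * ∑ s, |z s| := by rw [habs]; ring

end aux

/-- Markov chain perturbation bound (Mitrophanov 2005, Cor. 3.1; paper's Corollary 1):
if `μ` is a stationary distribution of the row-stochastic matrix `P`, `ν` a stationary
distribution of the row-stochastic matrix `Q`, and the chain `P` is geometrically ergodic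
with constants `C ≥ 1`, `0 < ρ < 1`, then with `n̂ = ⌈log C / log (1/ρ)⌉`,
`‖μ − ν‖₁ ≤ (n̂ + C ρ^n̂ / (1 − ρ)) · max_s ‖P s - Q s‖₁`. -/
theorem stmt5 {S : Type*} [Fintype S] [DecidableEq S] [Nonempty S]
    (P Q : Matrix S S ℝ) (μ ν : S → ℝ) (C ρ : ℝ)
    (hP0 : ∀ s s', 0 ≤ P s s') (hP1 : ∀ s, ∑ s', P s s' = 1)
    (hQ0 : ∀ s s', 0 ≤ Q s s') (hQ1 : ∀ s, ∑ s', Q s s' = 1)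
    (hμ0 : ∀ s, 0 ≤ μ s) (hμ1 : ∑ s, μ s = 1) (hμP : Matrix.vecMul μ P = μ)
    (hν0 : ∀ s, 0 ≤ ν s) (hν1 : ∑ s, ν s = 1) (hνQ : Matrix.vecMul ν Q = ν)
    (hC : 1 ≤ C) (hρ0 : 0 < ρ) (hρ1 : ρ < 1)
    (hmix : ∀ l : S → ℝ, (∀ s, 0 ≤ l s) → ∑ s, l s = 1 →
      ∀ t : ℕ, 1 ≤ t → ∑ s, |Matrix.vecMul l (P ^ t) s - μ s| ≤ C * ρ ^ t) :
    ∑ s, |μ s - ν s| ≤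
      ((⌈Real.log C / Real.log (1 / ρ)⌉ : ℝ)
          + C * ρ ^ (⌈Real.log C / Real.log (1 / ρ)⌉ : ℤ) / (1 - ρ))
        * Finset.univ.sup' Finset.univ_nonempty
            (fun s => ∑ s', |P s s' - Q s s'|) := by
  classical
  set D := Finset.univ.sup' Finset.univ_nonempty (fun s => ∑ s', |P s s' - Q s s'|) with hD
  obtain ⟨s₀⟩ := ‹Nonempty S›
  have hD0 : 0 ≤ D :=
    le_trans (Finset.sum_nonneg fun s' _ => abs_nonneg _)
      (Finset.le_sup' (fun s => ∑ s', |P s s' - Q s s'|) (Finset.mem_univ s₀))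
  set w : S → ℝ := Matrix.vecMul ν (P - Q) with hw
  have hwap : ∀ s, w s = ∑ i, ν i * (P i s - Q i s) := by
    intro s
    simp [hw, Matrix.vecMul, dotProduct, Matrix.sub_apply]
  have hwD : ∑ s, |w s| ≤ D := by
    calc ∑ s, |w s| ≤ ∑ s, ∑ i, ν i * |P i s - Q i s| := by
          refine Finset.sum_le_sum fun s _ => ?_
          rw [hwap s]
          refine (Finset.abs_sum_le_sum_abs _ _).trans (Finset.sum_le_sum fun i _ => ?_)
          rw [abs_mul, abs_of_nonneg (hν0 i)]
      _ = ∑ i, ν i * ∑ s, |P i s - Q i s| := by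
          rw [Finset.sum_comm]; simp [Finset.mul_sum]
      _ ≤ ∑ i, ν i * D := Finset.sum_le_sum fun i _ =>
          mul_le_mul_of_nonneg_left
            (Finset.le_sup' (fun s => ∑ s', |P s s' - Q s s'|) (Finset.mem_univ i)) (hν0 i)
      _ = D := by rw [← Finset.sum_mul, hν1, one_mul]
  have hwsum : ∑ s, w s = 0 := by
    have hP' : ∑ s, Matrix.vecMul ν P s = 1 := by
      simp only [Matrix.vecMul, dotProduct]
      rw [Finset.sum_comm]
      simp [← Finset.mul_sum, hP1, hν1]
    have hQ' : ∑ s, Matrix.vecMul ν Q s = 1 := by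
      simp only [Matrix.vecMul, dotProduct]
      rw [Finset.sum_comm]
      simp [← Finset.mul_sum, hQ1, hν1]
    simp only [hw, Matrix.vecMul_sub, Pi.sub_apply, Finset.sum_sub_distrib, hP', hQ']
    ring
  have hνQt : ∀ t : ℕ, Matrix.vecMul ν (Q ^ t) = ν := by
    intro t; induction t with
    | zero => simp [Matrix.vecMul_one]
    | succ n ih => rw [pow_succ, ← Matrix.vecMul_vecMul, ih, hνQ]
  set N := (⌈Real.log C / Real.log (1 / ρ)⌉).toNat with hN
  have hgeoIco : ∀ a b : ℕ, ∑ k ∈ Finset.Ico a b, ρ ^ k ≤ ρ ^ a / (1 - ρ) := by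
    intro a b
    rcases le_or_gt a b with hab | hab
    · rw [Finset.sum_Ico_eq_sum_range]
      have : ∑ j ∈ Finset.range (b - a), ρ ^ (a + j)
          = ρ ^ a * ∑ j ∈ Finset.range (b - a), ρ ^ j := by
        rw [Finset.mul_sum]
        exact Finset.sum_congr rfl fun j _ => by rw [pow_add]
      rw [this]
      have hgs : ∑ j ∈ Finset.range (b - a), ρ ^ j ≤ 1 / (1 - ρ) := by
        rw [geom_sum_eq (ne_of_lt hρ1)]
        have he : (ρ ^ (b - a) - 1) / (ρ - 1) = (1 - ρ ^ (b - a)) / (1 - ρ) := by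
          rw [← neg_div_neg_eq]; ring_nf
        rw [he]
        have hden : (0:ℝ) < 1 - ρ := by linarith
        gcongr
        nlinarith [pow_nonneg hρ0.le (b - a)]
      calc ρ ^ a * ∑ j ∈ Finset.range (b - a), ρ ^ j ≤ ρ ^ a * (1 / (1 - ρ)) := by
            exact mul_le_mul_of_nonneg_left hgs (by positivity)
        _ = ρ ^ a / (1 - ρ) := by ring
    · rw [Finset.Ico_eq_empty (by omega)]
      have hden : (0:ℝ) < 1 - ρ := by linarith
      simp
      positivity
  have hBound : ∀ t : ℕ, 1 ≤ t →
      ∑ s, |μ s - ν s| ≤ C * ρ ^ t + ((N : ℝ) + C * ρ ^ N / (1 - ρ)) * D := by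
    intro t ht
    -- decomposition
    have hterm : ∀ s, Matrix.vecMul ν (P ^ t) s - ν s
        = ∑ k ∈ Finset.range t, Matrix.vecMul w (P ^ k) s := by
      intro s
      have h1 : Matrix.vecMul ν (P ^ t) s - ν s = Matrix.vecMul ν (P ^ t - Q ^ t) s := by
        rw [Matrix.vecMul_sub, Pi.sub_apply, hνQt t]
      rw [h1, aux_tele P Q t]
      have h2 : Matrix.vecMul ν (∑ k ∈ Finset.range t, Q ^ (t - 1 - k) * (P - Q) * P ^ k) s
          = ∑ k ∈ Finset.range t, Matrix.vecMul ν (Q ^ (t - 1 - k) * (P - Q) * P ^ k) s := by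
        simp only [Matrix.vecMul, dotProduct, Finset.sum_apply, Matrix.sum_apply,
          Finset.mul_sum]
        rw [Finset.sum_comm]
      rw [h2]
      refine Finset.sum_congr rfl fun k _ => ?_
      rw [← Matrix.vecMul_vecMul, ← Matrix.vecMul_vecMul, hνQt, ← hw]
    have hsplit : ∑ s, |Matrix.vecMul ν (P ^ t) s - ν s|
        ≤ ∑ k ∈ Finset.range t, ∑ s, |Matrix.vecMul w (P ^ k) s| := by
      calc ∑ s, |Matrix.vecMul ν (P ^ t) s - ν s|
          = ∑ s, |∑ k ∈ Finset.range t, Matrix.vecMul w (P ^ k) s| := by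
            exact Finset.sum_congr rfl fun s _ => by rw [hterm s]
        _ ≤ ∑ s, ∑ k ∈ Finset.range t, |Matrix.vecMul w (P ^ k) s| :=
            Finset.sum_le_sum fun s _ => Finset.abs_sum_le_sum_abs _ _
        _ = ∑ k ∈ Finset.range t, ∑ s, |Matrix.vecMul w (P ^ k) s| := Finset.sum_comm
    -- bound the sum over k
    have hk1 : ∀ k, ∑ s, |Matrix.vecMul w (P ^ k) s| ≤ D :=
      fun k => (aux_contract_pow P hP0 hP1 w k).trans hwD
    have hk2 : ∀ k, ∑ s, |Matrix.vecMul w (P ^ k) s| ≤ C * ρ ^ k * D := by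
      intro k
      refine (aux_geo P μ C ρ hC hρ0 hmix w hwsum k).trans ?_
      have : 0 ≤ C * ρ ^ k := by positivity
      exact mul_le_mul_of_nonneg_left hwD this
    have hsum : ∑ k ∈ Finset.range t, ∑ s, |Matrix.vecMul w (P ^ k) s|
        ≤ ((N : ℝ) + C * ρ ^ N / (1 - ρ)) * D := by
      rcases le_or_gt t N with htN | htN
      · calc ∑ k ∈ Finset.range t, ∑ s, |Matrix.vecMul w (P ^ k) s|
            ≤ ∑ _k ∈ Finset.range t, D := Finset.sum_le_sum fun k _ => hk1 k
          _ = (t : ℝ) * D := by rw [Finset.sum_const, Finset.card_range]; simp [mul_comm]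
          _ ≤ ((N : ℝ) + C * ρ ^ N / (1 - ρ)) * D := by
              have h1 : (t : ℝ) ≤ (N : ℝ) := by exact_mod_cast htN
              have h2 : 0 ≤ C * ρ ^ N / (1 - ρ) := by
                have : (0:ℝ) < 1 - ρ := by linarith
                positivity
              nlinarith
      · have hranges : Finset.range t = Finset.Ico 0 N ∪ Finset.Ico N t := by
          rw [Finset.range_eq_Ico, Finset.Ico_union_Ico_eq_Ico (Nat.zero_le N) (le_of_lt htN)]
        rw [hranges, Finset.sum_union (by
          simp [Finset.disjoint_left]
          omega)]
        have hA : ∑ k ∈ Finset.Ico 0 N, ∑ s, |Matrix.vecMul w (P ^ k) s| ≤ (N : ℝ) * D := by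
          calc ∑ k ∈ Finset.Ico 0 N, ∑ s, |Matrix.vecMul w (P ^ k) s|
              ≤ ∑ _k ∈ Finset.Ico 0 N, D := Finset.sum_le_sum fun k _ => hk1 k
            _ = (N : ℝ) * D := by rw [Finset.sum_const, Nat.card_Ico]; simp [mul_comm]
        have hB : ∑ k ∈ Finset.Ico N t, ∑ s, |Matrix.vecMul w (P ^ k) s|
            ≤ C * ρ ^ N / (1 - ρ) * D := by
          calc ∑ k ∈ Finset.Ico N t, ∑ s, |Matrix.vecMul w (P ^ k) s|
              ≤ ∑ k ∈ Finset.Ico N t, C * ρ ^ k * D := Finset.sum_le_sum fun k _ => hk2 k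
            _ = C * D * ∑ k ∈ Finset.Ico N t, ρ ^ k := by
                rw [Finset.mul_sum]; exact Finset.sum_congr rfl fun k _ => by ring
            _ ≤ C * D * (ρ ^ N / (1 - ρ)) := by
                refine mul_le_mul_of_nonneg_left (hgeoIco N t) ?_
                positivity
            _ = C * ρ ^ N / (1 - ρ) * D := by ring
        calc _ ≤ (N : ℝ) * D + C * ρ ^ N / (1 - ρ) * D := add_le_add hA hB
          _ = ((N : ℝ) + C * ρ ^ N / (1 - ρ)) * D := by ring
    have hmixν : ∑ s, |μ s - Matrix.vecMul ν (P ^ t) s| ≤ C * ρ ^ t := by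
      have := hmix ν hν0 hν1 t ht
      calc ∑ s, |μ s - Matrix.vecMul ν (P ^ t) s|
          = ∑ s, |Matrix.vecMul ν (P ^ t) s - μ s| :=
            Finset.sum_congr rfl fun s _ => abs_sub_comm _ _
        _ ≤ C * ρ ^ t := this
    calc ∑ s, |μ s - ν s|
        ≤ ∑ s, (|μ s - Matrix.vecMul ν (P ^ t) s| + |Matrix.vecMul ν (P ^ t) s - ν s|) :=
          Finset.sum_le_sum fun s _ => abs_sub_le _ _ _
      _ = ∑ s, |μ s - Matrix.vecMul ν (P ^ t) s| + ∑ s, |Matrix.vecMul ν (P ^ t) s - ν s| :=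
          Finset.sum_add_distrib
      _ ≤ C * ρ ^ t + ((N : ℝ) + C * ρ ^ N / (1 - ρ)) * D :=
          add_le_add hmixν (hsplit.trans hsum)
  -- limit step
  have hfinal : ∑ s, |μ s - ν s| ≤ ((N : ℝ) + C * ρ ^ N / (1 - ρ)) * D := by
    refine le_of_forall_pos_le_add fun ε hε => ?_
    have hCpos : 0 < C := lt_of_lt_of_le one_pos hC
    obtain ⟨n, hn⟩ := exists_pow_lt_of_lt_one (div_pos hε hCpos) hρ1
    have hb := hBound (n + 1) (Nat.le_add_left 1 n)
    have hc : C * ρ ^ (n + 1) ≤ ε := by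
      have h1 : ρ ^ (n + 1) ≤ ρ ^ n := by
        apply pow_le_pow_of_le_one hρ0.le hρ1.le; omega
      have h2 : C * ρ ^ n < ε := by
        calc C * ρ ^ n < C * (ε / C) := by
              exact mul_lt_mul_of_pos_left hn hCpos
          _ = ε := by field_simp
      nlinarith
    linarith
  -- convert N back
  have hceil0 : 0 ≤ ⌈Real.log C / Real.log (1 / ρ)⌉ := by
    apply Int.ceil_nonneg
    apply div_nonneg (Real.log_nonneg hC)
    apply Real.log_nonneg
    rw [le_div_iff₀ hρ0]
    linarith
  have hNZ : (N : ℤ) = ⌈Real.log C / Real.log (1 / ρ)⌉ := Int.toNat_of_nonneg hceil0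
  have hkey : ((⌈Real.log C / Real.log (1 / ρ)⌉ : ℝ)
      + C * ρ ^ (⌈Real.log C / Real.log (1 / ρ)⌉ : ℤ) / (1 - ρ))
      = (N : ℝ) + C * ρ ^ N / (1 - ρ) := by
    rw [← hNZ]
    push_cast
    rw [zpow_natCast]
  rw [hkey]
  exact hfinal
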